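/- Let m and n be integers with m > n ≥ 2, m odd, n even, m ≥ 81 and 1/2 ≤ n/m ≤ 0.82. Then for every real number x with 0 ≤ x ≤ 5.78/m and m·sin(x) ≠ sin(m·x), one has g(x) = (n·sin(m·x) − m·sin(n·x))/(m·sin(x) − sin(m·x)) ≥ −n(m² − n²)/(m² − 1). -/

import Mathlib

open Real

open Set in

lemma aux_pos {f : ℝ → ℝ} (hf : Differentiable ℝ f) (h0 : f 0 = 0)
    (hd : ∀ y : ℝ, 0 ≤ y → 0 ≤ deriv f y) {y : ℝ} (hy : 0 ≤ y) : 0 ≤ f y := by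
  have hmono : MonotoneOn f (Ici (0:ℝ)) := by
    apply monotoneOn_of_deriv_nonneg (convex_Ici 0) hf.continuous.continuousOn
    · intro z hz; exact (hf z).differentiableWithinAt
    · intro z hz
      rw [interior_Ici] at hz
      exact hd z (le_of_lt hz)
  have := hmono (self_mem_Ici) hy hy
  rwa [h0] at this

lemma sin_ge3 {y : ℝ} (hy : 0 ≤ y) : y - y^3/6 ≤ Real.sin y := by
  have h := aux_pos (f := fun y => Real.sin y - (y - y^3/6)) ?_ ?_ ?_ hy
  · linarith [h]
  · fun_prop
  · simp
  · intro z hz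
    have h2 : HasDerivAt (fun y : ℝ => y - y^3/6) (1 - 3*z^2/6) z := by
      have := ((hasDerivAt_pow 3 z).div_const 6)
      simpa using (hasDerivAt_id z).fun_sub this
    rw [((Real.hasDerivAt_sin z).fun_sub h2).deriv]
    nlinarith [Real.one_sub_sq_div_two_le_cos (x := z)]

lemma cos_le4 {y : ℝ} (hy : 0 ≤ y) : Real.cos y ≤ 1 - y^2/2 + y^4/24 := by
  have h := aux_pos (f := fun y => (1 - y^2/2 + y^4/24) - Real.cos y) ?_ ?_ ?_ hy
  · linarith [h]
  · fun_prop
  · norm_num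
  · intro z hz
    have h2 : HasDerivAt (fun y : ℝ => 1 - y^2/2 + y^4/24) (-(2*z^1)/2 + 4*z^3/24) z := by
      have ha := ((hasDerivAt_pow 2 z).div_const 2)
      have hb := ((hasDerivAt_pow 4 z).div_const 24)
      exact (((hasDerivAt_const z (1:ℝ)).fun_sub ha).fun_add hb).congr_deriv (by push_cast; ring)
    rw [(h2.fun_sub (Real.hasDerivAt_cos z)).deriv]
    have := sin_ge3 hz
    nlinarith

lemma sin_le5 {y : ℝ} (hy : 0 ≤ y) : Real.sin y ≤ y - y^3/6 + y^5/120 := by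
  have h := aux_pos (f := fun y => (y - y^3/6 + y^5/120) - Real.sin y) ?_ ?_ ?_ hy
  · linarith [h]
  · fun_prop
  · norm_num
  · intro z hz
    have h2 : HasDerivAt (fun y : ℝ => y - y^3/6 + y^5/120) (1 - 3*z^2/6 + 5*z^4/120) z := by
      have ha := ((hasDerivAt_pow 3 z).div_const 6)
      have hb := ((hasDerivAt_pow 5 z).div_const 120)
      exact (((hasDerivAt_id z).fun_sub ha).fun_add hb).congr_deriv (by push_cast; ring)
    rw [(h2.fun_sub (Real.hasDerivAt_sin z)).deriv]
    have := cos_le4 hz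
    nlinarith

lemma cos_ge6 {y : ℝ} (hy : 0 ≤ y) : 1 - y^2/2 + y^4/24 - y^6/720 ≤ Real.cos y := by
  have h := aux_pos (f := fun y => Real.cos y - (1 - y^2/2 + y^4/24 - y^6/720)) ?_ ?_ ?_ hy
  · linarith [h]
  · fun_prop
  · norm_num
  · intro z hz
    have h2 : HasDerivAt (fun y : ℝ => 1 - y^2/2 + y^4/24 - y^6/720)
        (-(2*z^1)/2 + 4*z^3/24 - 6*z^5/720) z := by
      have ha := ((hasDerivAt_pow 2 z).div_const 2)
      have hb := ((hasDerivAt_pow 4 z).div_const 24)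
      have hc := ((hasDerivAt_pow 6 z).div_const 720)
      exact ((((hasDerivAt_const z (1:ℝ)).fun_sub ha).fun_add hb).fun_sub hc).congr_deriv (by push_cast; ring)
    rw [((Real.hasDerivAt_cos z).fun_sub h2).deriv]
    have := sin_le5 hz
    nlinarith

lemma sin_ge7 {y : ℝ} (hy : 0 ≤ y) : y - y^3/6 + y^5/120 - y^7/5040 ≤ Real.sin y := by
  have h := aux_pos (f := fun y => Real.sin y - (y - y^3/6 + y^5/120 - y^7/5040)) ?_ ?_ ?_ hy
  · linarith [h]
  · fun_prop
  · norm_num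
  · intro z hz
    have h2 : HasDerivAt (fun y : ℝ => y - y^3/6 + y^5/120 - y^7/5040)
        (1 - 3*z^2/6 + 5*z^4/120 - 7*z^6/5040) z := by
      have ha := ((hasDerivAt_pow 3 z).div_const 6)
      have hb := ((hasDerivAt_pow 5 z).div_const 120)
      have hc := ((hasDerivAt_pow 7 z).div_const 5040)
      exact ((((hasDerivAt_id z).fun_sub ha).fun_add hb).fun_sub hc).congr_deriv (by push_cast; ring)
    rw [((Real.hasDerivAt_sin z).fun_sub h2).deriv]
    have := cos_ge6 hz
    nlinarith

lemma cos_le8 {y : ℝ} (hy : 0 ≤ y) : Real.cos y ≤ 1 - y^2/2 + y^4/24 - y^6/720 + y^8/40320 := by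
  have h := aux_pos (f := fun y => (1 - y^2/2 + y^4/24 - y^6/720 + y^8/40320) - Real.cos y) ?_ ?_ ?_ hy
  · linarith [h]
  · fun_prop
  · norm_num
  · intro z hz
    have h2 : HasDerivAt (fun y : ℝ => 1 - y^2/2 + y^4/24 - y^6/720 + y^8/40320)
        (-(2*z^1)/2 + 4*z^3/24 - 6*z^5/720 + 8*z^7/40320) z := by
      have ha := ((hasDerivAt_pow 2 z).div_const 2)
      have hb := ((hasDerivAt_pow 4 z).div_const 24)
      have hc := ((hasDerivAt_pow 6 z).div_const 720)
      have hd := ((hasDerivAt_pow 8 z).div_const 40320)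
      exact (((((hasDerivAt_const z (1:ℝ)).fun_sub ha).fun_add hb).fun_sub hc).fun_add hd).congr_deriv (by push_cast; ring)
    rw [(h2.fun_sub (Real.hasDerivAt_cos z)).deriv]
    have := sin_ge7 hz
    nlinarith

lemma sin_le9 {y : ℝ} (hy : 0 ≤ y) :
    Real.sin y ≤ y - y^3/6 + y^5/120 - y^7/5040 + y^9/362880 := by
  have h := aux_pos (f := fun y => (y - y^3/6 + y^5/120 - y^7/5040 + y^9/362880) - Real.sin y) ?_ ?_ ?_ hy
  · linarith [h]
  · fun_prop
  · norm_num
  · intro z hz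
    have h2 : HasDerivAt (fun y : ℝ => y - y^3/6 + y^5/120 - y^7/5040 + y^9/362880)
        (1 - 3*z^2/6 + 5*z^4/120 - 7*z^6/5040 + 9*z^8/362880) z := by
      have ha := ((hasDerivAt_pow 3 z).div_const 6)
      have hb := ((hasDerivAt_pow 5 z).div_const 120)
      have hc := ((hasDerivAt_pow 7 z).div_const 5040)
      have hd := ((hasDerivAt_pow 9 z).div_const 362880)
      exact (((((hasDerivAt_id z).fun_sub ha).fun_add hb).fun_sub hc).fun_add hd).congr_deriv (by push_cast; ring)
    rw [(h2.fun_sub (Real.hasDerivAt_sin z)).deriv]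
    have := cos_le8 hz
    nlinarith


-- quartic bound for case (i)
lemma q1 {v : ℝ} (h1 : 82369/10000 ≤ v) (h2 : v ≤ 140398801/6250000) :
    1/5 ≤ v/6 - v^2/120 + v^3/5040 - v^4/362880 - 1681/2500 := by
  nlinarith [mul_nonneg (sub_nonneg.2 h1) (sub_nonneg.2 h2), sq_nonneg (v - 15),
    mul_nonneg (mul_nonneg (sub_nonneg.2 h1) (sub_nonneg.2 h2)) (sub_nonneg.2 h1),
    mul_nonneg (mul_nonneg (sub_nonneg.2 h1) (sub_nonneg.2 h2)) (sub_nonneg.2 h2),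
    sq_nonneg (v - 82369/10000), sq_nonneg (v - 140398801/6250000)]

-- cubic bound for case (ii)
lemma q2 {v : ℝ} (h1 : 49/16 ≤ v) (h2 : v ≤ 82369/10000) :
    1/500 ≤ 127/2058 - v/120 + v^2/5040 - v^3/362880 := by
  nlinarith [mul_nonneg (sub_nonneg.2 h1) (sub_nonneg.2 h2), sq_nonneg (v - 6),
    mul_nonneg (mul_nonneg (sub_nonneg.2 h1) (sub_nonneg.2 h2)) (sub_nonneg.2 h1),
    mul_nonneg (mul_nonneg (sub_nonneg.2 h1) (sub_nonneg.2 h2)) (sub_nonneg.2 h2)]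


lemma abs_sin_nat_mul (k : ℕ) (x : ℝ) : |Real.sin (k * x)| ≤ k * |Real.sin x| := by
  induction k with
  | zero => simp
  | succ j ih =>
    have hrw : ((j+1:ℕ):ℝ) * x = j*x + x := by push_cast; ring
    rw [hrw, Real.sin_add]
    have h1 : |Real.sin (j*x) * Real.cos x| ≤ (j:ℝ) * |Real.sin x| := by
      rw [abs_mul]
      calc |Real.sin (j*x)| * |Real.cos x| ≤ |Real.sin (j*x)| * 1 :=
            mul_le_mul_of_nonneg_left (Real.abs_cos_le_one x) (abs_nonneg _)
        _ = |Real.sin (j*x)| := mul_one _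
        _ ≤ (j:ℝ) * |Real.sin x| := ih
    have h2 : |Real.cos (j*x) * Real.sin x| ≤ |Real.sin x| := by
      rw [abs_mul]
      calc |Real.cos (j*x)| * |Real.sin x| ≤ 1 * |Real.sin x| :=
            mul_le_mul_of_nonneg_right (Real.abs_cos_le_one _) (abs_nonneg _)
        _ = |Real.sin x| := one_mul _
    calc |Real.sin (j*x) * Real.cos x + Real.cos (j*x) * Real.sin x|
        ≤ |Real.sin (j*x) * Real.cos x| + |Real.cos (j*x) * Real.sin x| := abs_add_le _ _
      _ ≤ (j:ℝ) * |Real.sin x| + |Real.sin x| := add_le_add h1 h2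
      _ = ((j+1:ℕ):ℝ) * |Real.sin x| := by push_cast; ring

lemma case1_key {M N : ℝ} (hM : 81 ≤ M) (hN : 41 ≤ N) (h50 : 50*N ≤ 41*M) :
    7*(N^2-1)*M^4 ≤ 24*((M^2-N^2)*(M^2*N^2-M^2-N^2)) := by
  have hN0 : 0 < N := by linarith
  have hM0 : 0 < M := by linarith
  have h1 : 2500*N^2 ≤ 1681*M^2 := by nlinarith
  have hN2 : 1681 ≤ N^2 := by nlinarith
  have hM2 : 6561 ≤ M^2 := by nlinarith
  have ha : 819/2500*M^2 ≤ M^2 - N^2 := by linarith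
  have hb : (11020799/11029041)*(M^2*N^2) ≤ M^2*N^2 - M^2 - N^2 := by
    have e1 : M^2 ≤ M^2*N^2/1681 := by nlinarith
    have e2 : N^2 ≤ M^2*N^2/6561 := by nlinarith
    linarith
  have key : (819/2500*M^2) * ((11020799/11029041)*(M^2*N^2)) ≤
      (M^2-N^2)*(M^2*N^2-M^2-N^2) :=
    mul_le_mul ha hb (by positivity) (by nlinarith)
  nlinarith [key, sq_nonneg M, sq_nonneg N, sq_nonneg (M*N), pow_pos hM0 4, sq_nonneg (M^2)]

set_option maxHeartbeats 1000000 in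
theorem stmt_3 (m n : ℤ) (hmn : m > n) (hn2 : n ≥ 2) (hmodd : Odd m) (hneven : Even n)
    (hm81 : m ≥ 81) (hlo : (1/2 : ℝ) ≤ (n : ℝ) / m) (hhi : (n : ℝ) / m ≤ 0.82)
    (x : ℝ) (hx1 : 0 ≤ x) (hx2 : x ≤ 5.78 / m)
    (hx : (m : ℝ) * Real.sin x ≠ Real.sin (m * x)) :
    ((n : ℝ) * Real.sin (m * x) - (m : ℝ) * Real.sin (n * x)) /
        ((m : ℝ) * Real.sin x - Real.sin (m * x)) ≥
      -((n : ℝ) * ((m : ℝ) ^ 2 - (n : ℝ) ^ 2)) / ((m : ℝ) ^ 2 - 1) := by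
  have hM81 : (81:ℝ) ≤ (m:ℝ) := by exact_mod_cast hm81
  have hMN0 : (n:ℝ) < (m:ℝ) := by exact_mod_cast hmn
  have hM0 : (0:ℝ) < (m:ℝ) := by linarith
  have h2N : (m:ℝ) ≤ 2*(n:ℝ) := by
    rw [le_div_iff₀ hM0] at hlo
    linarith
  have hn41 : (41:ℤ) ≤ n := by
    have h1 : (81:ℝ) ≤ 2*(n:ℝ) := by linarith
    have h2 : (81:ℤ) ≤ 2*n := by exact_mod_cast h1
    omega
  have hN41 : (41:ℝ) ≤ (n:ℝ) := by exact_mod_cast hn41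
  set M := (m:ℝ) with hMdef
  set N := (n:ℝ) with hNdef
  have hN0 : (0:ℝ) < N := by linarith
  have h50 : 50*N ≤ 41*M := by
    rw [div_le_iff₀ hM0] at hhi
    norm_num at hhi
    linarith
  have hMN : N < M := hMN0
  have hm6561 : (6561:ℝ) ≤ M^2 := by
    have := mul_le_mul hM81 hM81 (by norm_num) hM0.le
    linarith [this]
  -- range facts
  have hx2' : x ≤ 289/50/M := by
    have h578 : (5.78:ℝ) = 289/50 := by norm_num
    rwa [h578] at hx2
  have ht : M*x ≤ 289/50 := by
    rw [le_div_iff₀ hM0] at hx2'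
    linarith
  have htx0 : 0 ≤ M*x := mul_nonneg (le_of_lt hM0) hx1
  have hux0 : 0 ≤ N*x := mul_nonneg (le_of_lt hN0) hx1
  have hxsmall : x ≤ 289/4050 := by
    nlinarith [mul_nonneg hx1 (by linarith : (0:ℝ) ≤ M - 81), ht]
  have hxpi : x ≤ π := by
    have := Real.pi_gt_three
    linarith
  have hsinx : 0 ≤ Real.sin x := Real.sin_nonneg_of_nonneg_of_le_pi hx1 hxpi
  -- denominator positive
  have habs : |Real.sin (M*x)| ≤ M * Real.sin x := by
    have hk : ((m.toNat : ℕ) : ℝ) = M := by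
      rw [hMdef]
      exact_mod_cast congrArg Int.cast (Int.toNat_of_nonneg (by omega))
    have h := abs_sin_nat_mul m.toNat x
    rw [hk] at h
    rwa [abs_of_nonneg hsinx] at h
  have hDle : Real.sin (M*x) ≤ M * Real.sin x := le_trans (le_abs_self _) habs
  have hD : 0 < M * Real.sin x - Real.sin (M*x) :=
    sub_pos.2 (lt_of_le_of_ne hDle (Ne.symm hx))
  have hm2 : (0:ℝ) < M^2 - 1 := by linarith
  rw [ge_iff_le, div_le_div_iff₀ hm2 hD]
  -- positivity of coefficients
  have hMsq : 0 < M^2 - N^2 := by linarith [mul_pos (sub_pos.2 hMN) (by linarith : (0:ℝ) < M + N)]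
  have hA1 : (0:ℝ) ≤ N*(M^2-N^2) := mul_nonneg hN0.le hMsq.le
  have hA2 : (0:ℝ) ≤ N*(N^2-1) := mul_nonneg hN0.le (by nlinarith)
  have hA3 : (0:ℝ) ≤ M*(M^2-1) := mul_nonneg hM0.le (by linarith)
  have hs1 : x - x^3/6 ≤ Real.sin x := sin_ge3 hx1
  have hE : 0 ≤ N*(M^2-N^2)*(M*Real.sin x) + N*(N^2-1)*Real.sin (M*x)
      - M*(M^2-1)*Real.sin (N*x) := by
    have e1 : 0 ≤ N*(M^2-N^2)*M*(Real.sin x - (x - x^3/6)) :=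
      mul_nonneg (mul_nonneg hA1 (le_of_lt hM0)) (by linarith)
    rcases le_or_gt (M*x) (7/2) with hc | hc
    · -- case 1 : small t
      have hst : (M*x) - (M*x)^3/6 + (M*x)^5/120 - (M*x)^7/5040 ≤ Real.sin (M*x) :=
        sin_ge7 htx0
      have hsn : Real.sin (N*x) ≤ (N*x) - (N*x)^3/6 + (N*x)^5/120 := sin_le5 hux0
      have e2 : 0 ≤ N*(N^2-1)*(Real.sin (M*x) - ((M*x) - (M*x)^3/6 + (M*x)^5/120 - (M*x)^7/5040)) :=
        mul_nonneg hA2 (by linarith)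
      have e3 : 0 ≤ M*(M^2-1)*(((N*x) - (N*x)^3/6 + (N*x)^5/120) - Real.sin (N*x)) :=
        mul_nonneg hA3 (by linarith)
      have key := case1_key hM81 hN41 h50
      have hmx2 : M^2*x^2 ≤ 49/4 := by
        have := mul_le_mul hc hc htx0 (by norm_num)
        linarith [this]
      have k1 : 0 ≤ M*N*(24*((M^2-N^2)*(M^2*N^2-M^2-N^2)) - 7*(N^2-1)*M^4) :=
        mul_nonneg (mul_nonneg (le_of_lt hM0) (le_of_lt hN0)) (by linarith)
      have k2 : 0 ≤ N*(N^2-1)*M^5*(49/4 - M^2*x^2) :=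
        mul_nonneg (mul_nonneg hA2 (by positivity)) (by linarith)
      have hinner : 0 ≤ M*N*((M^2-N^2)*(M^2*N^2-M^2-N^2))/120 - N*(N^2-1)*M^7*x^2/5040 := by
        linarith [k1, k2]
      have hx5 : (0:ℝ) ≤ x^5 := by positivity
      have hPlow := mul_nonneg hx5 hinner
      linarith [e1, e2, e3, hPlow]
    · -- case 2 : large t
      have hst : -1 ≤ Real.sin (M*x) := Real.neg_one_le_sin _
      set u := N*x with hudef
      have hsn : Real.sin u ≤ u - u^3/6 + u^5/120 - u^7/5040 + u^9/362880 := sin_le9 hux0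
      have e2 : 0 ≤ N*(N^2-1)*(Real.sin (M*x) - (-1)) := mul_nonneg hA2 (by linarith)
      have e3 : 0 ≤ M*(M^2-1)*((u - u^3/6 + u^5/120 - u^7/5040 + u^9/362880) - Real.sin u) :=
        mul_nonneg hA3 (by linarith)
      have hu175 : 7/4 ≤ u := by
        have hh := mul_nonneg (by linarith : (0:ℝ) ≤ 2*N - M) hx1
        have : 2*u = (2*N - M)*x + M*x := by rw [hudef]; ring
        linarith [hc]
      have huhi : u ≤ 11849/2500 := by
        have hh := mul_nonneg (by linarith : (0:ℝ) ≤ 41*M - 50*N) hx1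
        have h2 : 50*u = 41*(M*x) - (41*M - 50*N)*x := by rw [hudef]; ring
        linarith [ht]
      have hu0 : (0:ℝ) ≤ u := hux0
      have hP9sin : -1 ≤ u - u^3/6 + u^5/120 - u^7/5040 + u^9/362880 :=
        le_trans (Real.neg_one_le_sin u) hsn
      have hxx : M^2*x^2 ≤ 83521/2500 := by
        have := mul_le_mul ht ht htx0 (by norm_num)
        linarith [this]
      have herr : N*(M^2-N^2)*M*x^3 ≤ M*u*(83521/2500) := by
        have h1 := mul_nonneg (mul_nonneg (le_of_lt hM0) hu0) (by linarith : (0:ℝ) ≤ 83521/2500 - M^2*x^2)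
        have h2 := mul_nonneg (mul_nonneg (le_of_lt hM0) hu0)
          (mul_nonneg (mul_nonneg hN0.le hN0.le) (sq_nonneg x))
        have heq3 : N*(M^2-N^2)*M*x^3 = (M^2-N^2)*(M*u)*x^2 := by rw [hudef]; ring
        linarith [h1, h2, heq3]
      have hP9m : M*(M^2-1)*(u - u^3/6 + u^5/120 - u^7/5040 + u^9/362880)
          ≤ M^3*(u - u^3/6 + u^5/120 - u^7/5040 + u^9/362880) + M := by
        have h1 := mul_nonneg (le_of_lt hM0)
          (by linarith : (0:ℝ) ≤ (u - u^3/6 + u^5/120 - u^7/5040 + u^9/362880) + 1)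
        linarith [h1]
      have c2 : 0 ≤ M*(M^2 - 6561)/200 := by
        have := mul_nonneg hM0.le (by linarith : (0:ℝ) ≤ M^2 - 6561)
        linarith
      have c3 : 0 ≤ M*(83521/15000)*(11849/2500 - u) :=
        mul_nonneg (by positivity) (by linarith)
      have hR2 : 0 ≤ N*(M^2-N^2)*M*(x - x^3/6) - N*(N^2-1)
          - M*(M^2-1)*(u - u^3/6 + u^5/120 - u^7/5040 + u^9/362880) := by
        rcases le_or_gt (287/100) u with hui | hui
        · -- subcase i
          have ha : 819/2500*M^2 ≤ M^2 - N^2 := by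
            have := mul_le_mul h50 h50 (by linarith) (by linarith)
            linarith [this]
          have hMu : 0 ≤ M*u := mul_nonneg hM0.le hu0
          have hA1x : 819/2500*M^3*u ≤ N*(M^2-N^2)*M*x := by
            have h1 := mul_nonneg hMu (by linarith : (0:ℝ) ≤ (M^2-N^2) - 819/2500*M^2)
            have heq : N*(M^2-N^2)*M*x = (M^2-N^2)*(M*u) := by rw [hudef]; ring
            linarith [h1, heq]
          have hA2x : N*(N^2-1) ≤ 68921/125000*M^3 := by
            have h3 : (50*N)^3 ≤ (41*M)^3 := pow_le_pow_left₀ (by linarith) h50 3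
            linarith [h3, hN0]
          have hv1 : 82369/10000 ≤ u^2 := by
            have := mul_le_mul hui hui (by norm_num) (by linarith)
            linarith [this]
          have hv2 : u^2 ≤ 140398801/6250000 := by
            have := mul_le_mul huhi huhi hu0 (by norm_num)
            linarith [this]
          have hq := q1 hv1 hv2
          have hphi : 68921/125000 + (u - u^3/6 + u^5/120 - u^7/5040 + u^9/362880) + 1/200
              ≤ 819/2500*u := by
            have hkey : (287/100)*(1/5) ≤ u * (u^2/6 - (u^2)^2/120 + (u^2)^3/5040 - (u^2)^4/362880 - 1681/2500) :=
              mul_le_mul hui hq (by norm_num) (by linarith)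
            linarith [hkey]
          have c1 : 0 ≤ M^3*((819/2500*u) - 68921/125000 - (u - u^3/6 + u^5/120 - u^7/5040 + u^9/362880) - 1/200) :=
            mul_nonneg (by positivity) (by linarith)
          linarith [c1, c2, c3, herr, hA1x, hA2x, hP9m]
        · -- subcase ii
          have hMu : 0 ≤ M*u := mul_nonneg hM0.le hu0
          have hr : 7*N ≤ 2*M*u := by
            have h1 := mul_le_mul_of_nonneg_right hc.le hN0.le
            have heq : (M*x)*N = M*u := by rw [hudef]; ring
            linarith [h1, heq]
          have hn2' : N^2 ≤ 4*u^2*M^2/49 := by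
            have h1 := mul_nonneg (by linarith : (0:ℝ) ≤ 2*M*u - 7*N) (by linarith : (0:ℝ) ≤ 2*M*u + 7*N)
            linarith [h1]
          have hA1x : (1 - 4*u^2/49)*M^3*u ≤ N*(M^2-N^2)*M*x := by
            have h1 := mul_nonneg hMu (by linarith : (0:ℝ) ≤ (M^2 - N^2) - (1 - 4*u^2/49)*M^2)
            have heq : N*(M^2-N^2)*M*x = (M^2-N^2)*(M*u) := by rw [hudef]; ring
            linarith [h1, heq]
          have hA2x : N*(N^2-1) ≤ 8*u^3/343*M^3 := by
            have h3 : (7*N)^3 ≤ (2*M*u)^3 := pow_le_pow_left₀ (by linarith) hr 3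
            linarith [h3, hN0]
          have hv1 : 49/16 ≤ u^2 := by
            have := mul_le_mul hu175 hu175 (by norm_num) (by linarith)
            linarith [this]
          have hv2 : u^2 ≤ 82369/10000 := by
            have := mul_le_mul hui.le hui.le hu0 (by norm_num)
            linarith [this]
          have hq := q2 hv1 hv2
          have hphi : 8*u^3/343 + 4*u^2/49*u + (u - u^3/6 + u^5/120 - u^7/5040 + u^9/362880) + 1/200
              ≤ u := by
            have hu3 : (7/4:ℝ)^3 ≤ u^3 := pow_le_pow_left₀ (by norm_num) hu175 3
            have hkey : (7/4:ℝ)^3 * (1/500) ≤ u^3 * (127/2058 - u^2/120 + (u^2)^2/5040 - (u^2)^3/362880) :=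
              mul_le_mul hu3 hq (by norm_num) (by positivity)
            linarith [hkey]
          have c1 : 0 ≤ M^3*(u - 8*u^3/343 - 4*u^2/49*u - (u - u^3/6 + u^5/120 - u^7/5040 + u^9/362880) - 1/200) :=
            mul_nonneg (by positivity) (by linarith)
          linarith [c1, c2, c3, herr, hA1x, hA2x, hP9m]
      linarith [e1, e2, e3, hR2, hP9m]
  linarith [hE]
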